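/- Let {B_i} be an orthogonal BSCC decomposition of E_∞(H). Then for each i and every density operator ρ, lim_{k→∞} tr(P_{B_i} E^k(ρ)) = tr(P_{B_i} E_∞(ρ)). -/

import Mathlib

open Matrix Filter Topology
open scoped ComplexOrder

/-- The matrix of the orthogonal projection onto a subspace `X`. -/
noncomputable def projMat {d : ℕ} (X : Submodule ℂ (EuclideanSpace ℂ (Fin d))) :
    Matrix (Fin d) (Fin d) ℂ :=
  Matrix.toEuclideanLin.symm ((X.subtypeL.comp X.orthogonalProjectionOnto).toLinearMap)

/-- The support of an operator: the range of the associated linear map. -/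
noncomputable def matSupp {d : ℕ} (A : Matrix (Fin d) (Fin d) ℂ) :
    Submodule ℂ (EuclideanSpace ℂ (Fin d)) :=
  LinearMap.range (Matrix.toEuclideanLin A)

/-- The outer product `|v⟩⟨v|`. -/
noncomputable def outer {d : ℕ} (v : EuclideanSpace ℂ (Fin d)) : Matrix (Fin d) (Fin d) ℂ :=
  fun i j => v i * star (v j)

/-- The completely positive map `A ↦ ∑ i, E i * A * (E i)†` given by Kraus operators `E`. -/
noncomputable def krausMap {d m : ℕ} (E : Fin m → Matrix (Fin d) (Fin d) ℂ)
    (A : Matrix (Fin d) (Fin d) ℂ) : Matrix (Fin d) (Fin d) ℂ :=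
  ∑ i, E i * A * (E i)ᴴ

/-- The reachable space of a state `ρ`: the join of the supports of all iterates. -/
noncomputable def Reach {d m : ℕ} (E : Fin m → Matrix (Fin d) (Fin d) ℂ)
    (ρ : Matrix (Fin d) (Fin d) ℂ) : Submodule ℂ (EuclideanSpace ℂ (Fin d)) :=
  ⨆ n : ℕ, matSupp ((krausMap E)^[n] ρ)

/-- A BSCC: a nonzero invariant subspace `B` such that the reachable space of every
nonzero vector of `B` is exactly `B`. -/
noncomputable def IsBSCC {d m : ℕ} (E : Fin m → Matrix (Fin d) (Fin d) ℂ)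
    (B : Submodule ℂ (EuclideanSpace ℂ (Fin d))) : Prop :=
  B ≠ ⊥ ∧
  (∀ ρ : Matrix (Fin d) (Fin d) ℂ, ρ.PosSemidef → matSupp ρ ≤ B →
      matSupp (krausMap E ρ) ≤ B) ∧
  (∀ v : EuclideanSpace ℂ (Fin d), v ∈ B → v ≠ 0 → Reach E (outer v) = B)

section auxlemmas

variable {d m : ℕ}

lemma projMat_apply (X : Submodule ℂ (EuclideanSpace ℂ (Fin d))) (x : EuclideanSpace ℂ (Fin d)) :
    Matrix.toEuclideanLin (projMat X) x = (X.orthogonalProjectionOnto x : EuclideanSpace ℂ (Fin d)) := by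
  simp [projMat]

lemma projMat_isHermitian (X : Submodule ℂ (EuclideanSpace ℂ (Fin d))) :
    (projMat X).IsHermitian := by
  rw [Matrix.isHermitian_iff_isSymmetric]
  intro x y
  rw [projMat_apply, projMat_apply]
  have := X.inner_starProjection_left_eq_right x y
  rwa [Submodule.starProjection_apply, Submodule.starProjection_apply] at this

lemma matrix_ext_of_toEuclideanLin {A B : Matrix (Fin d) (Fin d) ℂ}
    (h : ∀ x, Matrix.toEuclideanLin A x = Matrix.toEuclideanLin B x) : A = B :=
  Matrix.toEuclideanLin.injective (LinearMap.ext h)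

lemma toEuclideanLin_mul_apply (A B : Matrix (Fin d) (Fin d) ℂ) (x : EuclideanSpace ℂ (Fin d)) :
    Matrix.toEuclideanLin (A * B) x = Matrix.toEuclideanLin A (Matrix.toEuclideanLin B x) := by
  show WithLp.toLp 2 ((A * B) *ᵥ x.ofLp) = WithLp.toLp 2 (A *ᵥ (B *ᵥ x.ofLp))
  rw [Matrix.mulVec_mulVec]

lemma projMat_mul_self (X : Submodule ℂ (EuclideanSpace ℂ (Fin d))) :
    projMat X * projMat X = projMat X := by
  apply matrix_ext_of_toEuclideanLin
  intro x
  rw [toEuclideanLin_mul_apply, projMat_apply, projMat_apply]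
  exact congrArg _ (Submodule.orthogonalProjectionOnto_mem_subspace_eq_self _)

lemma projMat_posSemidef (X : Submodule ℂ (EuclideanSpace ℂ (Fin d))) :
    (projMat X).PosSemidef := by
  have := Matrix.posSemidef_conjTranspose_mul_self (projMat X)
  rwa [(projMat_isHermitian X).eq, projMat_mul_self] at this

lemma psd_trace_nonneg {A : Matrix (Fin d) (Fin d) ℂ} (hA : A.PosSemidef) : 0 ≤ A.trace := by
  rw [Matrix.trace]
  apply Finset.sum_nonneg
  intro i _
  have := hA.dotProduct_mulVec_nonneg (Pi.single i 1)
  simpa [dotProduct, Pi.single_apply, Matrix.mulVec_single] using this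

open scoped MatrixOrder Matrix.Norms.L2Operator in
lemma trace_mul_psd_nonneg {A B : Matrix (Fin d) (Fin d) ℂ}
    (hA : A.PosSemidef) (hB : B.PosSemidef) : 0 ≤ (A * B).trace := by
  obtain ⟨C, rfl⟩ := CStarAlgebra.nonneg_iff_eq_star_mul_self.mp hA.nonneg
  rw [Matrix.mul_assoc, Matrix.trace_mul_comm]
  exact psd_trace_nonneg (hB.mul_mul_conjTranspose_same C)

lemma hermitian_matSupp_eq {A : Matrix (Fin d) (Fin d) ℂ} (hA : A.IsHermitian) :
    matSupp A = (LinearMap.ker (Matrix.toEuclideanLin A))ᗮ := by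
  have hsym := Matrix.isHermitian_iff_isSymmetric.mp hA
  set T := Matrix.toEuclideanLin A
  have hle : matSupp A ≤ (LinearMap.ker T)ᗮ := by
    rintro _ ⟨x, rfl⟩
    rw [Submodule.mem_orthogonal]
    intro u hu
    rw [← hsym u x, LinearMap.mem_ker.mp hu, inner_zero_left]
  apply Submodule.eq_of_le_of_finrank_eq hle
  have h1 := LinearMap.finrank_range_add_finrank_ker T
  have h2 := Submodule.finrank_add_finrank_orthogonal (K := LinearMap.ker T)
  simp only [finrank_euclideanSpace, Fintype.card_fin] at h1 h2
  show Module.finrank ℂ (LinearMap.range T) = Module.finrank ℂ ((LinearMap.ker T)ᗮ)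
  omega

lemma psd_ker_le {A B : Matrix (Fin d) (Fin d) ℂ} (hA : A.PosSemidef) (hB : B.PosSemidef) :
    LinearMap.ker (Matrix.toEuclideanLin (A + B)) ≤ LinearMap.ker (Matrix.toEuclideanLin A) := by
  intro x hx
  have hx' : (A + B) *ᵥ x = 0 := by simpa [Matrix.add_mulVec] using congrArg WithLp.ofLp (LinearMap.mem_ker.mp hx)
  have h0 : star x ⬝ᵥ A *ᵥ x + star x ⬝ᵥ B *ᵥ x = 0 := by
    rw [← dotProduct_add, ← Matrix.add_mulVec, hx', dotProduct_zero]
  have hA0 : star x ⬝ᵥ A *ᵥ x = 0 :=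
    ((add_eq_zero_iff_of_nonneg (hA.dotProduct_mulVec_nonneg x) (hB.dotProduct_mulVec_nonneg x)).mp h0).1
  exact LinearMap.mem_ker.mpr (by simp [Matrix.toEuclideanLin_apply, (hA.dotProduct_mulVec_zero_iff x).mp hA0])

lemma matSupp_le_add {A B : Matrix (Fin d) (Fin d) ℂ} (hA : A.PosSemidef) (hB : B.PosSemidef) :
    matSupp A ≤ matSupp (A + B) := by
  rw [hermitian_matSupp_eq hA.isHermitian, hermitian_matSupp_eq (hA.add hB).isHermitian]
  exact Submodule.orthogonal_le (psd_ker_le hA hB)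

lemma posSemidef_sum (s : Finset (Fin m)) (f : Fin m → Matrix (Fin d) (Fin d) ℂ)
    (hf : ∀ j ∈ s, (f j).PosSemidef) : (∑ j ∈ s, f j).PosSemidef := by
  induction s using Finset.cons_induction with
  | empty => simpa using Matrix.PosSemidef.zero
  | cons a s ha ih =>
      rw [Finset.sum_cons]
      exact (hf a (Finset.mem_cons_self a s)).add
        (ih fun j hj => hf j (Finset.mem_cons_of_mem hj))

lemma matSupp_le_sum (s : Finset (Fin m)) (f : Fin m → Matrix (Fin d) (Fin d) ℂ)
    (hf : ∀ j ∈ s, (f j).PosSemidef) {j : Fin m} (hj : j ∈ s) :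
    matSupp (f j) ≤ matSupp (∑ k ∈ s, f k) := by
  rw [← Finset.add_sum_erase s f hj]
  exact matSupp_le_add (hf j hj)
    (posSemidef_sum _ _ fun k hk => hf k (Finset.mem_of_mem_erase hk))

lemma outer_mulVec (v : EuclideanSpace ℂ (Fin d)) (x : Fin d → ℂ) :
    outer v *ᵥ x = (star v ⬝ᵥ x) • (v : Fin d → ℂ) := by
  funext a
  simp only [outer, Matrix.mulVec, dotProduct, Pi.smul_apply, smul_eq_mul, Pi.star_apply,
    Finset.sum_mul, Finset.mul_sum]
  have hra : ((∑ b, star (v b) * x b) • v) a = (∑ b, star (v b) * x b) * v a := rfl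
  exact Finset.sum_congr rfl fun b _ => by ring

lemma outer_posSemidef (v : EuclideanSpace ℂ (Fin d)) : (outer v).PosSemidef := by
  refine Matrix.PosSemidef.of_dotProduct_mulVec_nonneg ?_ ?_
  · ext i j
    simp [outer, Matrix.conjTranspose_apply, mul_comm]
  · intro x
    rw [outer_mulVec, dotProduct_smul]
    have h : star x ⬝ᵥ (v : Fin d → ℂ) = star (star v ⬝ᵥ x) := by
      simp [dotProduct, mul_comm]
    rw [smul_eq_mul, h, mul_comm]
    exact star_mul_self_nonneg (star v ⬝ᵥ x)

lemma matSupp_outer_le {v : EuclideanSpace ℂ (Fin d)} {X : Submodule ℂ (EuclideanSpace ℂ (Fin d))}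
    (hv : v ∈ X) : matSupp (outer v) ≤ X := by
  rintro _ ⟨x, rfl⟩
  show WithLp.toLp 2 ((outer v) *ᵥ x.ofLp) ∈ X
  rw [outer_mulVec]
  exact X.smul_mem _ hv

lemma mem_matSupp_outer (v : EuclideanSpace ℂ (Fin d)) : v ∈ matSupp (outer v) := by
  by_cases hv : v = 0
  · subst hv; exact Submodule.zero_mem _
  · have hne : star (v : Fin d → ℂ) ⬝ᵥ (v : Fin d → ℂ) ≠ 0 := by
      rw [Ne, dotProduct_star_self_eq_zero]
      simpa using hv
    refine ⟨(star (v : Fin d → ℂ) ⬝ᵥ (v : Fin d → ℂ))⁻¹ • v, ?_⟩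
    rw [_root_.map_smul]
    have hv2 : Matrix.toEuclideanLin (outer v) v = (star (v : Fin d → ℂ) ⬝ᵥ (v : Fin d → ℂ)) • v :=
      congrArg (WithLp.toLp 2) (outer_mulVec v v)
    rw [hv2, smul_smul, inv_mul_cancel₀ hne, one_smul]

lemma krausMap_outer (E : Fin m → Matrix (Fin d) (Fin d) ℂ) (v : EuclideanSpace ℂ (Fin d)) :
    krausMap E (outer v) = ∑ j, outer (WithLp.toLp 2 (E j *ᵥ v : Fin d → ℂ) : EuclideanSpace ℂ (Fin d)) := by
  unfold krausMap
  refine Finset.sum_congr rfl fun j _ => ?_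
  ext a b
  simp only [outer, Matrix.mul_apply, Matrix.conjTranspose_apply, Matrix.mulVec, dotProduct,
    Pi.star_apply, Finset.sum_mul, Finset.mul_sum, star_sum, star_mul', PiLp.toLp_apply]
  refine Finset.sum_congr rfl fun c _ => Finset.sum_congr rfl fun e _ => ?_
  ring

lemma mulVec_mem_of_invariant (E : Fin m → Matrix (Fin d) (Fin d) ℂ)
    {X : Submodule ℂ (EuclideanSpace ℂ (Fin d))}
    (hinv : ∀ ρ : Matrix (Fin d) (Fin d) ℂ, ρ.PosSemidef → matSupp ρ ≤ X →
      matSupp (krausMap E ρ) ≤ X)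
    {v : EuclideanSpace ℂ (Fin d)} (hv : v ∈ X) (j : Fin m) :
    (WithLp.toLp 2 (E j *ᵥ v : Fin d → ℂ) : EuclideanSpace ℂ (Fin d)) ∈ X := by
  have hsupp : matSupp (krausMap E (outer v)) ≤ X :=
    hinv (outer v) (outer_posSemidef v) (matSupp_outer_le hv)
  rw [krausMap_outer] at hsupp
  refine hsupp ?_
  refine matSupp_le_sum Finset.univ _ (fun k _ => outer_posSemidef _) (Finset.mem_univ j) ?_
  exact mem_matSupp_outer _

lemma QEP_eq_zero (E : Fin m → Matrix (Fin d) (Fin d) ℂ)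
    {X : Submodule ℂ (EuclideanSpace ℂ (Fin d))}
    (hinv : ∀ ρ : Matrix (Fin d) (Fin d) ℂ, ρ.PosSemidef → matSupp ρ ≤ X →
      matSupp (krausMap E ρ) ≤ X) (j : Fin m) :
    (1 - projMat X) * E j * projMat X = 0 := by
  apply matrix_ext_of_toEuclideanLin
  intro x
  rw [toEuclideanLin_mul_apply, toEuclideanLin_mul_apply, _root_.map_zero]
  set w := Matrix.toEuclideanLin (E j) (Matrix.toEuclideanLin (projMat X) x) with hw
  have hwmem : w ∈ X := by
    rw [hw, projMat_apply]
    show (WithLp.toLp 2 (E j *ᵥ ((X.orthogonalProjectionOnto x : EuclideanSpace ℂ (Fin d)) : Fin d → ℂ) : Fin d → ℂ) :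
      EuclideanSpace ℂ (Fin d)) ∈ X
    exact mulVec_mem_of_invariant E hinv (SetLike.coe_mem _) j
  show WithLp.toLp 2 ((1 - projMat X) *ᵥ w.ofLp) = 0
  rw [Matrix.sub_mulVec, Matrix.one_mulVec]
  have : projMat X *ᵥ w = w := by
    have := projMat_apply X w
    rw [← Submodule.starProjection_apply, Submodule.starProjection_eq_self_iff.mpr hwmem] at this
    exact congrArg WithLp.ofLp this
  rw [this, sub_self]
  rfl

lemma krausMap_posSemidef (E : Fin m → Matrix (Fin d) (Fin d) ℂ)
    {A : Matrix (Fin d) (Fin d) ℂ} (hA : A.PosSemidef) : (krausMap E A).PosSemidef :=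
  posSemidef_sum _ _ fun j _ => hA.mul_mul_conjTranspose_same (E j)

lemma krausMap_trace {E : Fin m → Matrix (Fin d) (Fin d) ℂ}
    (hE : ∑ i, (E i)ᴴ * E i = 1) (A : Matrix (Fin d) (Fin d) ℂ) :
    (krausMap E A).trace = A.trace := by
  unfold krausMap
  rw [Matrix.trace_sum]
  have : ∀ j : Fin m, (E j * A * (E j)ᴴ).trace = ((E j)ᴴ * E j * A).trace := by
    intro j
    rw [Matrix.trace_mul_cycle]
  rw [Finset.sum_congr rfl fun j _ => this j, ← Matrix.trace_sum, ← Finset.sum_mul, hE, one_mul]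

end auxlemmas
section part2
variable {d m : ℕ}

lemma sandwich_term {P A : Matrix (Fin d) (Fin d) ℂ} (hPH : Pᴴ = P) (hPP : P * P = P)
    (hQAP : (1 - P) * A * P = 0) :
    (P * A * (1 - P))ᴴ * (P * A * (1 - P)) =
      (1 - P) * (Aᴴ * A) * (1 - P) - Aᴴ * (1 - P) * A := by
  have hAP : A * P = P * A * P := by
    have hexp : (1 - P) * A * P = A * P - P * A * P := by noncomm_ring
    rw [hexp] at hQAP
    exact sub_eq_zero.mp hQAP
  have hPAH : P * Aᴴ = (P * A * P)ᴴ := by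
    rw [← hAP, conjTranspose_mul, hPH]
  have hPK : P * (P * A * P) = P * A * P := by
    have e : P * (P * A * P) = (P * P) * A * P := by noncomm_ring
    rw [e, hPP]
  have hKP : (P * A * P)ᴴ * P = (P * A * P)ᴴ := by
    conv_rhs => rw [← hPK, conjTranspose_mul, hPH]
  have hLH : (P * A * (1 - P))ᴴ = (1 - P) * Aᴴ * P := by
    simp only [conjTranspose_mul, conjTranspose_sub, conjTranspose_one, hPH, Matrix.mul_assoc]
  have hRHS : (1 - P) * (Aᴴ * A) * (1 - P) - Aᴴ * (1 - P) * A
      = Aᴴ * P * A - Aᴴ * (P * A * P) - (P * A * P)ᴴ * A + (P * A * P)ᴴ * (P * A * P) := by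
    calc (1 - P) * (Aᴴ * A) * (1 - P) - Aᴴ * (1 - P) * A
        = Aᴴ * P * A - Aᴴ * (A * P) - P * Aᴴ * A + P * Aᴴ * (A * P) := by noncomm_ring
      _ = Aᴴ * P * A - Aᴴ * (P * A * P) - (P * A * P)ᴴ * A + (P * A * P)ᴴ * (P * A * P) := by
          rw [hAP, hPAH]
  rw [hLH, hRHS]
  calc (1 - P) * Aᴴ * P * (P * A * (1 - P))
      = (1 - P) * Aᴴ * (P * P) * A * (1 - P) := by noncomm_ring
    _ = (1 - P) * Aᴴ * P * A * (1 - P) := by rw [hPP]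
    _ = Aᴴ * P * A - Aᴴ * (P * (A * P)) - P * Aᴴ * (P * A) + P * Aᴴ * (P * (A * P)) := by
        noncomm_ring
    _ = Aᴴ * P * A - Aᴴ * (P * (P * A * P)) - (P * A * P)ᴴ * (P * A)
          + (P * A * P)ᴴ * (P * (P * A * P)) := by rw [hAP, hPAH]
    _ = Aᴴ * P * A - Aᴴ * (P * A * P) - (P * A * P)ᴴ * (P * A)
          + (P * A * P)ᴴ * (P * A * P) := by rw [hPK]
    _ = Aᴴ * P * A - Aᴴ * (P * A * P) - (P * A * P)ᴴ * P * A
          + (P * A * P)ᴴ * (P * A * P) := by noncomm_ring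
    _ = Aᴴ * P * A - Aᴴ * (P * A * P) - (P * A * P)ᴴ * A
          + (P * A * P)ᴴ * (P * A * P) := by rw [hKP]

lemma key_sum {E : Fin m → Matrix (Fin d) (Fin d) ℂ}
    (hE : ∑ i, (E i)ᴴ * E i = 1) {P : Matrix (Fin d) (Fin d) ℂ}
    (hPH : Pᴴ = P) (hPP : P * P = P)
    (hQEP : ∀ j, (1 - P) * E j * P = 0) :
    (1 - P) - ∑ j, (E j)ᴴ * (1 - P) * E j
      = ∑ j, (P * E j * (1 - P))ᴴ * (P * E j * (1 - P)) := by
  rw [Finset.sum_congr rfl fun j _ => sandwich_term hPH hPP (hQEP j),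
    Finset.sum_sub_distrib]
  have h1 : ∑ j, (1 - P) * ((E j)ᴴ * E j) * (1 - P) = (1 - P) * (1 - P) := by
    rw [← Finset.sum_mul, ← Finset.mul_sum, hE, mul_one]
  have hQQ : ((1 : Matrix (Fin d) (Fin d) ℂ) - P) * (1 - P) = 1 - P := by
    have e : ((1 : Matrix (Fin d) (Fin d) ℂ) - P) * (1 - P) = 1 - P - P + P * P := by noncomm_ring
    rw [e, hPP]
    abel
  rw [h1, hQQ]

lemma trace_step {E : Fin m → Matrix (Fin d) (Fin d) ℂ}
    (hE : ∑ i, (E i)ᴴ * E i = 1) {P : Matrix (Fin d) (Fin d) ℂ}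
    (hPH : Pᴴ = P) (hPP : P * P = P)
    (hQEP : ∀ j, (1 - P) * E j * P = 0)
    {σ : Matrix (Fin d) (Fin d) ℂ} (hσ : σ.PosSemidef) :
    (P * σ).trace ≤ (P * krausMap E σ).trace := by
  have h1 : ((1 - P) * krausMap E σ).trace = ((∑ j, (E j)ᴴ * (1 - P) * E j) * σ).trace := by
    rw [krausMap, Finset.mul_sum, Matrix.trace_sum, Finset.sum_mul, Matrix.trace_sum]
    refine Finset.sum_congr rfl fun j _ => ?_
    have e1 : (1 - P) * (E j * σ * (E j)ᴴ) = (1 - P) * (E j * σ) * (E j)ᴴ := by noncomm_ring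
    rw [e1, Matrix.trace_mul_cycle]
    congr 1
    noncomm_ring
  have e2 : (((1 - P) - ∑ j, (E j)ᴴ * (1 - P) * E j) * σ).trace
      = ((1 - P) * σ).trace - ((∑ j, (E j)ᴴ * (1 - P) * E j) * σ).trace := by
    rw [Matrix.sub_mul, Matrix.trace_sub]
  have h2 : ((1 - P) * krausMap E σ).trace ≤ ((1 - P) * σ).trace := by
    rw [← sub_nonneg, h1, ← e2, key_sum hE hPH hPP hQEP, Matrix.sum_mul, Matrix.trace_sum]
    exact Finset.sum_nonneg fun j _ =>
      trace_mul_psd_nonneg (Matrix.posSemidef_conjTranspose_mul_self _) hσ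
  have hPQ : ∀ A : Matrix (Fin d) (Fin d) ℂ, (P * A).trace = A.trace - ((1 - P) * A).trace := by
    intro A
    have e : P * A = A - (1 - P) * A := by noncomm_ring
    rw [e, Matrix.trace_sub]
  rw [hPQ σ, hPQ (krausMap E σ), krausMap_trace hE]
  exact sub_le_sub_left h2 _

end part2
/-- For an orthogonal BSCC decomposition of `E_∞(H)`, the limit probability of each BSCC
equals the probability under the asymptotic average. -/
theorem stmt17 {d m : ℕ} (E : Fin m → Matrix (Fin d) (Fin d) ℂ)
    (hE : ∑ i, (E i)ᴴ * E i = 1)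
    (Einf : Matrix (Fin d) (Fin d) ℂ → Matrix (Fin d) (Fin d) ℂ)
    (hEinf : ∀ A : Matrix (Fin d) (Fin d) ℂ, Tendsto (fun N : ℕ => (N : ℂ)⁻¹ • ∑ n ∈ Finset.Icc 1 N, (krausMap E)^[n] A) atTop (nhds (Einf A)))
    {u : ℕ} (B : Fin u → Submodule ℂ (EuclideanSpace ℂ (Fin d)))
    (hB : ∀ i, IsBSCC E (B i))
    (hBorth : ∀ i j, i ≠ j → ∀ x ∈ B i, ∀ y ∈ B j, inner ℂ x y = (0 : ℂ))
    (hBsup : (⨆ i, B i) = matSupp (Einf ((d : ℂ)⁻¹ • (1 : Matrix (Fin d) (Fin d) ℂ)))) :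
    ∀ (i : Fin u) (ρ : Matrix (Fin d) (Fin d) ℂ), ρ.PosSemidef → ρ.trace = 1 →
      Tendsto (fun k : ℕ => (projMat (B i) * (krausMap E)^[k] ρ).trace) atTop
        (nhds ((projMat (B i) * Einf ρ).trace)) := by
  intro i ρ hρ hρtr
  set P := projMat (B i) with hPdef
  have hPH : Pᴴ = P := (projMat_isHermitian (B i)).eq
  have hPP : P * P = P := projMat_mul_self (B i)
  have hQEP : ∀ j, (1 - P) * E j * P = 0 := fun j => QEP_eq_zero E (hB i).2.1 j
  have hQPSD : ((1 : Matrix (Fin d) (Fin d) ℂ) - P).PosSemidef := by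
    have hC := Matrix.posSemidef_conjTranspose_mul_self ((1 : Matrix (Fin d) (Fin d) ℂ) - P)
    rw [Matrix.conjTranspose_sub, Matrix.conjTranspose_one, hPH] at hC
    have e : ((1 : Matrix (Fin d) (Fin d) ℂ) - P) * (1 - P) = 1 - P - P + P * P := by noncomm_ring
    rw [e, hPP] at hC
    convert hC using 1
    abel
  set F := krausMap E with hF
  have hPSD : ∀ k, (F^[k] ρ).PosSemidef := by
    intro k
    induction k with
    | zero => simpa using hρ
    | succ k ih =>
        rw [Function.iterate_succ_apply']
        exact krausMap_posSemidef E ih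
  have htr : ∀ k, (F^[k] ρ).trace = 1 := by
    intro k
    induction k with
    | zero => simpa using hρtr
    | succ k ih =>
        rw [Function.iterate_succ_apply', hF, krausMap_trace hE, ih]
  set a : ℕ → ℂ := fun k => (P * F^[k] ρ).trace with ha
  have hmono : ∀ k, a k ≤ a (k + 1) := by
    intro k
    have h := trace_step hE hPH hPP hQEP (hPSD k)
    rw [ha]
    simp only []
    rw [Function.iterate_succ_apply']
    exact h
  have h0 : ∀ k, 0 ≤ a k := fun k => trace_mul_psd_nonneg (projMat_posSemidef (B i)) (hPSD k)
  have hub : ∀ k, a k ≤ 1 := by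
    intro k
    have hsplit : P * F^[k] ρ + (1 - P) * F^[k] ρ = F^[k] ρ := by noncomm_ring
    have h1 : a k + ((1 - P) * F^[k] ρ).trace = 1 := by
      rw [ha]
      simp only []
      rw [← Matrix.trace_add, hsplit, htr k]
    have h2 : 0 ≤ ((1 - P) * F^[k] ρ).trace := trace_mul_psd_nonneg hQPSD (hPSD k)
    calc a k ≤ a k + ((1 - P) * F^[k] ρ).trace := le_add_of_nonneg_right h2
    _ = 1 := h1
  set r : ℕ → ℝ := fun k => (a k).re with hr
  have himzero : ∀ k, a k = ((r k : ℝ) : ℂ) := by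
    intro k
    have h := Complex.nonneg_iff.mp (h0 k)
    apply Complex.ext
    · simp [hr]
    · simp [hr, ← h.2]
  have hrmono : Monotone r :=
    monotone_nat_of_le_succ fun k => (Complex.le_def.mp (hmono k)).1
  have hrbdd : BddAbove (Set.range r) := by
    refine ⟨1, ?_⟩
    rintro _ ⟨k, rfl⟩
    have := (Complex.le_def.mp (hub k)).1
    simpa using this
  have hrconv : Tendsto r atTop (𝓝 (⨆ k, r k)) := tendsto_atTop_ciSup hrmono hrbdd
  set L : ℝ := ⨆ k, r k with hL
  have haconv : Tendsto a atTop (𝓝 ((L : ℝ) : ℂ)) := by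
    have h1 : Tendsto (fun k => ((r k : ℝ) : ℂ)) atTop (𝓝 ((L : ℝ) : ℂ)) :=
      (Complex.continuous_ofReal.tendsto L).comp hrconv
    exact h1.congr fun k => (himzero k).symm
  have hces : Tendsto (fun N : ℕ => (N : ℂ)⁻¹ • ∑ n ∈ Finset.Icc 1 N, a n) atTop
      (𝓝 ((L : ℝ) : ℂ)) := by
    have hshift : Tendsto (fun n => a (n + 1)) atTop (𝓝 ((L : ℝ) : ℂ)) :=
      haconv.comp (tendsto_add_atTop_nat 1)
    have hc := hshift.cesaro_smul
    refine hc.congr fun N => ?_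
    have hsum : ∑ n ∈ Finset.Icc 1 N, a n = ∑ j ∈ Finset.range N, a (j + 1) := by
      rw [← Finset.Ico_add_one_right_eq_Icc, Finset.sum_Ico_eq_sum_range]
      exact Finset.sum_congr (by rw [Nat.add_sub_cancel]) fun j _ => by rw [Nat.add_comm]
    rw [hsum, Complex.real_smul, smul_eq_mul]
    push_cast
    ring
  have hcont : Continuous (fun A : Matrix (Fin d) (Fin d) ℂ => (P * A).trace) :=
    (continuous_const.matrix_mul continuous_id).matrix_trace
  have hces2 : Tendsto (fun N : ℕ => (P * ((N : ℂ)⁻¹ • ∑ n ∈ Finset.Icc 1 N, F^[n] ρ)).trace)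
      atTop (𝓝 ((P * Einf ρ).trace)) := (hcont.tendsto _).comp (hEinf ρ)
  have heq : ∀ N : ℕ, (P * ((N : ℂ)⁻¹ • ∑ n ∈ Finset.Icc 1 N, F^[n] ρ)).trace
      = (N : ℂ)⁻¹ • ∑ n ∈ Finset.Icc 1 N, a n := by
    intro N
    rw [Matrix.mul_smul, Matrix.trace_smul, Finset.mul_sum, Matrix.trace_sum]
  have hces2' : Tendsto (fun N : ℕ => (N : ℂ)⁻¹ • ∑ n ∈ Finset.Icc 1 N, a n) atTop
      (𝓝 ((P * Einf ρ).trace)) := hces2.congr heq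
  have hLeq : ((L : ℝ) : ℂ) = (P * Einf ρ).trace := tendsto_nhds_unique hces hces2'
  rw [← hLeq]
  exact haconv
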